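/- (Theorem 1, SHB case.) Under the SHB setup below, for every T ∈ ℕ with T ≥ 1, min_{0 ≤ t ≤ T−1} E[‖∇f(θ_t)‖²] ≤ 2(f(θ_0) − f*) · B_T + σ² · V_T, where B_T := 1/(Σ_{t=0}^{T−1} α_t) and V_T := (Σ_{t=0}^{T−1} α_t/b_t)/(Σ_{t=0}^{T−1} α_t). -/

import Mathlib

open MeasureTheory Finset
open scoped BigOperators RealInnerProductSpace



lemma shb_descent {E : Type*} [NormedAddCommGroup E] [InnerProductSpace ℝ E] [CompleteSpace E]
    {f : E → ℝ} {L : ℝ} (hL : 0 ≤ L)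
    (hfdiff : Differentiable ℝ f)
    (hflip : LipschitzWith (Real.toNNReal L) (gradient f)) (x y : E) :
    f y ≤ f x + ⟪gradient f x, y - x⟫ + L / 2 * ‖y - x‖ ^ 2 := by
  set v := y - x with hv
  set φ : ℝ → ℝ := fun t => f (x + t • v) - t * ⟪gradient f x, v⟫ - L * t ^ 2 / 2 * ‖v‖ ^ 2
    with hφ
  have hderiv : ∀ t : ℝ, HasDerivAt φ
      (⟪gradient f (x + t • v), v⟫ - ⟪gradient f x, v⟫ - L * t * ‖v‖ ^ 2) t := by
    intro t
    have hcurve : HasDerivAt (fun t : ℝ => x + t • v) v t := by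
      simpa using (hasDerivAt_id t).smul_const v |>.const_add x
    have hf1 : HasDerivAt (fun t : ℝ => f (x + t • v)) ⟪gradient f (x + t • v), v⟫ t := by
      have := ((hfdiff (x + t • v)).hasGradientAt.hasFDerivAt).comp_hasDerivAt t hcurve
      simpa [InnerProductSpace.toDual_apply_apply, Function.comp_def] using this
    have h2 : HasDerivAt (fun t : ℝ => t * ⟪gradient f x, v⟫) ⟪gradient f x, v⟫ t := by
      simpa using (hasDerivAt_id t).mul_const (⟪gradient f x, v⟫)
    have h3 : HasDerivAt (fun t : ℝ => L * t ^ 2 / 2 * ‖v‖ ^ 2) (L * t * ‖v‖ ^ 2) t := by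
      have : HasDerivAt (fun t : ℝ => t ^ 2) (2 * t) t := by
        simpa using hasDerivAt_pow 2 t
      have := ((this.const_mul L).div_const 2).mul_const (‖v‖ ^ 2)
      exact this.congr_deriv (by ring)
    rw [hφ]; exact (hf1.sub h2).sub h3
  have hanti : AntitoneOn φ (Set.Icc 0 1) := by
    apply antitoneOn_of_deriv_nonpos (convex_Icc 0 1)
    · exact Continuous.continuousOn
        (continuous_iff_continuousAt.2 fun t => (hderiv t).continuousAt)
    · intro t ht; exact (hderiv t).differentiableAt.differentiableWithinAt
    · intro t ht
      rw [(hderiv t).deriv]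
      have ht0 : 0 ≤ t := by
        rcases (interior_subset ht : t ∈ Set.Icc 0 1).1 with h; exact h
      have h1 : ⟪gradient f (x + t • v), v⟫ - ⟪gradient f x, v⟫
          = ⟪gradient f (x + t • v) - gradient f x, v⟫ := by
        rw [inner_sub_left]
      rw [h1]
      have h2 : ⟪gradient f (x + t • v) - gradient f x, v⟫
          ≤ ‖gradient f (x + t • v) - gradient f x‖ * ‖v‖ := real_inner_le_norm _ _
      have h3 : ‖gradient f (x + t • v) - gradient f x‖ ≤ L * (t * ‖v‖) := by
        have := hflip.dist_le_mul (x + t • v) x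
        rw [dist_eq_norm] at this
        simpa [norm_smul, abs_of_nonneg ht0, Real.coe_toNNReal _ hL, mul_assoc] using this
      nlinarith [norm_nonneg v, mul_le_mul_of_nonneg_right h3 (norm_nonneg v)]
  have h01 := hanti (Set.mem_Icc.2 ⟨le_refl 0, zero_le_one⟩)
    (Set.mem_Icc.2 ⟨zero_le_one, le_refl 1⟩) zero_le_one
  simp only [hφ, zero_smul, add_zero, one_smul, zero_mul, zero_pow, mul_zero, zero_div,
    sub_zero, one_pow, mul_one, one_mul] at h01
  have : x + v = y := by rw [hv]; abel
  rw [this] at h01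
  linarith


lemma shb_integrable_inner {Ω : Type*} {mΩ : MeasurableSpace Ω} {P : Measure Ω}
    {E : Type*} [NormedAddCommGroup E] [InnerProductSpace ℝ E]
    {X Y : Ω → E} (hX : MemLp X 2 P) (hY : MemLp Y 2 P) :
    Integrable (fun ω => ⟪X ω, Y ω⟫) P := by
  have hXsq : Integrable (fun ω => ‖X ω‖ ^ 2) P :=
    (memLp_two_iff_integrable_sq_norm hX.aestronglyMeasurable).1 hX
  have hYsq : Integrable (fun ω => ‖Y ω‖ ^ 2) P :=
    (memLp_two_iff_integrable_sq_norm hY.aestronglyMeasurable).1 hY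
  refine Integrable.mono' ((hXsq.add hYsq).div_const 2)
    (hX.aestronglyMeasurable.inner hY.aestronglyMeasurable) ?_
  filter_upwards with ω
  have h1 : |⟪X ω, Y ω⟫| ≤ ‖X ω‖ * ‖Y ω‖ := abs_real_inner_le_norm _ _
  have h2 : ‖X ω‖ * ‖Y ω‖ ≤ (‖X ω‖ ^ 2 + ‖Y ω‖ ^ 2) / 2 := by nlinarith [sq_nonneg (‖X ω‖ - ‖Y ω‖)]
  calc ‖⟪X ω, Y ω⟫‖ = |⟪X ω, Y ω⟫| := rfl
    _ ≤ (‖X ω‖ ^ 2 + ‖Y ω‖ ^ 2) / 2 := le_trans h1 h2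

lemma shb_condexp_clm {Ω' : Type*} {m mΩ' : MeasurableSpace Ω'} {P : Measure Ω'}
    [IsProbabilityMeasure P] (hm : m ≤ mΩ')
    {E F : Type*} [NormedAddCommGroup E] [NormedSpace ℝ E] [CompleteSpace E]
    [NormedAddCommGroup F] [NormedSpace ℝ F] [CompleteSpace F]
    {Y : Ω' → E} (hY : Integrable Y P) (T : E →L[ℝ] F) :
    (fun ω => T ((P[Y|m]) ω)) =ᵐ[P] P[fun ω => T (Y ω)|m] := by
  haveI : SigmaFinite (P.trim hm) := by infer_instance
  refine ae_eq_condExp_of_forall_setIntegral_eq hm (T.integrable_comp hY) ?_ ?_ ?_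
  · have hInt : Integrable (P[Y|m]) P := integrable_condExp
    exact fun s _ _ => (T.integrable_comp hInt).integrableOn
  · intro s hs hμs
    have hInt : Integrable (P[Y|m]) P := integrable_condExp
    rw [T.integral_comp_comm hInt.integrableOn,
      T.integral_comp_comm hY.integrableOn, setIntegral_condExp hm hY hs]
  · exact StronglyMeasurable.aestronglyMeasurable
      (T.continuous.comp_stronglyMeasurable stronglyMeasurable_condExp)

lemma shb_orth {Ω : Type*} {m mΩ : MeasurableSpace Ω} {P : Measure Ω}
    [IsProbabilityMeasure P] (hm : m ≤ mΩ) {d : ℕ}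
    {X Y h : Ω → EuclideanSpace ℝ (Fin d)}
    (hXm : StronglyMeasurable[m] X) (hX2 : MemLp X 2 P) (hY2 : MemLp Y 2 P)
    (hh2 : MemLp h 2 P) (hcond : P[Y|m] =ᵐ[P] h) :
    ∫ ω, ⟪X ω, Y ω⟫ ∂P = ∫ ω, ⟪X ω, h ω⟫ ∂P := by
  haveI : SigmaFinite (P.trim hm) := by infer_instance
  have hXim : ∀ i, StronglyMeasurable[m] (fun ω => X ω i) := fun i =>
    (EuclideanSpace.proj (𝕜 := ℝ) i).continuous.comp_stronglyMeasurable hXm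
  have hXi2 : ∀ i, MemLp (fun ω => X ω i) 2 P := fun i =>
    (EuclideanSpace.proj (𝕜 := ℝ) i).comp_memLp' hX2
  have hYi2 : ∀ i, MemLp (fun ω => Y ω i) 2 P := fun i =>
    (EuclideanSpace.proj (𝕜 := ℝ) i).comp_memLp' hY2
  have hhi2 : ∀ i, MemLp (fun ω => h ω i) 2 P := fun i =>
    (EuclideanSpace.proj (𝕜 := ℝ) i).comp_memLp' hh2
  have hmulint : ∀ i, Integrable (fun ω => X ω i * Y ω i) P := fun i => by
    simpa [RCLike.inner_apply, conj_trivial, mul_comm] using shb_integrable_inner (hXi2 i) (hYi2 i)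
  have hmulinth : ∀ i, Integrable (fun ω => X ω i * h ω i) P := fun i => by
    simpa [RCLike.inner_apply, conj_trivial, mul_comm] using shb_integrable_inner (hXi2 i) (hhi2 i)
  have key : ∀ i, ∫ ω, X ω i * Y ω i ∂P = ∫ ω, X ω i * h ω i ∂P := by
    intro i
    have hYint : Integrable Y P := hY2.integrable one_le_two
    have hYiint : Integrable (fun ω => Y ω i) P :=
      (hYi2 i).integrable one_le_two
    have hproj := shb_condexp_clm hm hYint (EuclideanSpace.proj (𝕜 := ℝ) i)
    -- P[Y_i | m] =ᵐ fun ω => h ω i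
    have hci : P[fun ω => Y ω i|m] =ᵐ[P] fun ω => h ω i := by
      refine hproj.symm.trans ?_
      filter_upwards [hcond] with ω hω
      simp [hω]
    have hmul := condExp_mul_of_stronglyMeasurable_left (m := m) (μ := P) (hXim i)
      (by exact hmulint i) hYiint
    calc ∫ ω, X ω i * Y ω i ∂P
        = ∫ ω, ((fun ω => X ω i) * (fun ω => Y ω i)) ω ∂P := by rfl
      _ = ∫ ω, (P[(fun ω => X ω i) * (fun ω => Y ω i)|m]) ω ∂P :=
          (integral_condExp hm).symm
      _ = ∫ ω, X ω i * h ω i ∂P := by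
          refine integral_congr_ae ?_
          refine hmul.trans ?_
          filter_upwards [hci] with ω hω
          simp [hω]
  calc ∫ ω, ⟪X ω, Y ω⟫ ∂P = ∫ ω, ∑ i, X ω i * Y ω i ∂P := by
        refine integral_congr_ae (Filter.Eventually.of_forall fun ω => ?_)
        simp [PiLp.inner_apply, RCLike.inner_apply, conj_trivial, mul_comm]
    _ = ∑ i, ∫ ω, X ω i * Y ω i ∂P := integral_finset_sum _ (fun i _ => hmulint i)
    _ = ∑ i, ∫ ω, X ω i * h ω i ∂P := by exact Finset.sum_congr rfl fun i _ => key i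
    _ = ∫ ω, ∑ i, X ω i * h ω i ∂P := (integral_finset_sum _ (fun i _ => hmulinth i)).symm
    _ = ∫ ω, ⟪X ω, h ω⟫ ∂P := by
        refine integral_congr_ae (Filter.Eventually.of_forall fun ω => ?_)
        simp [PiLp.inner_apply, RCLike.inner_apply, conj_trivial, mul_comm]

lemma shb_norm_add_sq {Ω : Type*} {mΩ : MeasurableSpace Ω} {P : Measure Ω}
    {E : Type*} [NormedAddCommGroup E] [InnerProductSpace ℝ E]
    {A B : Ω → E} (hA : MemLp A 2 P) (hB : MemLp B 2 P) :
    ∫ ω, ‖A ω + B ω‖ ^ 2 ∂P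
      = ∫ ω, ‖A ω‖ ^ 2 ∂P + 2 * ∫ ω, ⟪A ω, B ω⟫ ∂P + ∫ ω, ‖B ω‖ ^ 2 ∂P := by
  have hAsq : Integrable (fun ω => ‖A ω‖ ^ 2) P :=
    (memLp_two_iff_integrable_sq_norm hA.aestronglyMeasurable).1 hA
  have hBsq : Integrable (fun ω => ‖B ω‖ ^ 2) P :=
    (memLp_two_iff_integrable_sq_norm hB.aestronglyMeasurable).1 hB
  have hin : Integrable (fun ω => ⟪A ω, B ω⟫) P := shb_integrable_inner hA hB
  have h12 : Integrable (fun ω => ‖A ω‖ ^ 2 + 2 * ⟪A ω, B ω⟫) P := hAsq.add (hin.const_mul 2)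
  calc ∫ ω, ‖A ω + B ω‖ ^ 2 ∂P
      = ∫ ω, (‖A ω‖ ^ 2 + 2 * ⟪A ω, B ω⟫ + ‖B ω‖ ^ 2) ∂P := by
        refine integral_congr_ae (Filter.Eventually.of_forall fun ω => ?_)
        exact norm_add_sq_real _ _
    _ = ∫ ω, (‖A ω‖ ^ 2 + 2 * ⟪A ω, B ω⟫) ∂P + ∫ ω, ‖B ω‖ ^ 2 ∂P := integral_add h12 hBsq
    _ = ∫ ω, ‖A ω‖ ^ 2 ∂P + 2 * ∫ ω, ⟪A ω, B ω⟫ ∂P + ∫ ω, ‖B ω‖ ^ 2 ∂P := by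
        rw [integral_add hAsq (hin.const_mul 2), integral_const_mul]

set_option maxHeartbeats 1000000 in
theorem shb_general_convergence_bound
    {Ω : Type*} {mΩ : MeasurableSpace Ω} (P : Measure Ω) [IsProbabilityMeasure P]
    (ℱ : ℕ → MeasurableSpace Ω)
    (hℱmono : Monotone ℱ) (hℱle : ∀ t, ℱ t ≤ mΩ)
    (d : ℕ) (L : ℝ) (hL : 0 < L)
    (f : EuclideanSpace ℝ (Fin d) → ℝ)
    (hfdiff : Differentiable ℝ f)
    (hflip : LipschitzWith (Real.toNNReal L) (gradient f))
    (hfbdd : BddBelow (Set.range f))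
    (β σ c : ℝ) (hβ0 : 0 ≤ β) (hβ1 : β < 1) (hσ : 0 ≤ σ)
    (hc1 : 1 ≤ c) (hc2 : c * β ^ 2 < 1)
    (α : ℕ → ℝ) (hα : ∀ t, 0 < α t)
    (hαc : ∀ t, α (t + 1) ≤ c * α t)
    (hαmax : ∀ t, α t < (1 - c * β ^ 2) / L)
    (b : ℕ → ℝ) (hb : ∀ t, 0 < b t)
    (θ₀ : EuclideanSpace ℝ (Fin d))
    (g θ m : ℕ → Ω → EuclideanSpace ℝ (Fin d))
    (hθ0 : θ 0 = fun _ => θ₀)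
    (hm0 : m 0 = g 0)
    (hmrec : ∀ t, m (t + 1) = fun ω => β • m t ω + g (t + 1) ω)
    (hθrec : ∀ t, θ (t + 1) = fun ω => θ t ω - α t • m t ω)
    (hgmeas : ∀ t, StronglyMeasurable[ℱ (t + 1)] (g t))
    (hg2 : ∀ t, MemLp (g t) 2 P)
    (hθmeas : ∀ t, StronglyMeasurable[ℱ t] (θ t))
    (hmmeas : ∀ t, StronglyMeasurable[ℱ (t + 1)] (m t))
    (hgmean : ∀ t, P[g t | ℱ t] =ᵐ[P] fun ω => gradient f (θ t ω))
    (hgvar : ∀ t, ∀ᵐ ω ∂P,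
      (P[fun ω' => ‖g t ω' - gradient f (θ t ω')‖ ^ 2 | ℱ t]) ω ≤ σ ^ 2 / b t)
    (hfint : ∀ t, Integrable (fun ω => f (θ t ω)) P)
    (hgradint : ∀ t, Integrable (fun ω => ‖gradient f (θ t ω)‖ ^ 2) P)
    (hmint : ∀ t, Integrable (fun ω => ‖m t ω‖ ^ 2) P)
    (T : ℕ) (hT : 1 ≤ T) :
    (Finset.range T).inf' (Finset.nonempty_range_iff.mpr (by omega))
        (fun t => ∫ ω, ‖gradient f (θ t ω)‖ ^ 2 ∂P)
      ≤ 2 * (f θ₀ - ⨅ x, f x) * (1 / ∑ t ∈ Finset.range T, α t)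
        + σ ^ 2 * ((∑ t ∈ Finset.range T, α t / b t) / ∑ t ∈ Finset.range T, α t) := by
  classical
  -- basic measurability / integrability facts
  have hgrc : Continuous (gradient f) := hflip.continuous
  have hgm : ∀ t, StronglyMeasurable[ℱ t] fun ω => gradient f (θ t ω) :=
    fun t => hgrc.comp_stronglyMeasurable (hθmeas t)
  have hgr2 : ∀ t, MemLp (fun ω => gradient f (θ t ω)) 2 P := fun t =>
    (memLp_two_iff_integrable_sq_norm
      ((hgm t).mono (hℱle t)).aestronglyMeasurable).2 (hgradint t)
  have hm2 : ∀ t, MemLp (m t) 2 P := fun t =>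
    (memLp_two_iff_integrable_sq_norm
      ((hmmeas t).mono (hℱle (t + 1))).aestronglyMeasurable).2 (hmint t)
  have hξ2 : ∀ t, MemLp (fun ω => g t ω - gradient f (θ t ω)) 2 P := fun t =>
    (hg2 t).sub (hgr2 t)
  have hξint : ∀ t, Integrable (fun ω => ‖g t ω - gradient f (θ t ω)‖ ^ 2) P := fun t =>
    (memLp_two_iff_integrable_sq_norm (hξ2 t).aestronglyMeasurable).1 (hξ2 t)
  have hv : ∀ t, ∫ ω, ‖g t ω - gradient f (θ t ω)‖ ^ 2 ∂P ≤ σ ^ 2 / b t := by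
    intro t
    haveI : SigmaFinite (P.trim (hℱle t)) := by infer_instance
    calc ∫ ω, ‖g t ω - gradient f (θ t ω)‖ ^ 2 ∂P
        = ∫ ω, (P[fun ω' => ‖g t ω' - gradient f (θ t ω')‖ ^ 2|ℱ t]) ω ∂P :=
          (integral_condExp (hℱle t)).symm
      _ ≤ ∫ _ω, σ ^ 2 / b t ∂P :=
          integral_mono_ae integrable_condExp (integrable_const _) (hgvar t)
      _ = σ ^ 2 / b t := by simp
  have horth : ∀ t (X : Ω → EuclideanSpace ℝ (Fin d)), StronglyMeasurable[ℱ t] X →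
      MemLp X 2 P → ∫ ω, ⟪X ω, g t ω - gradient f (θ t ω)⟫ ∂P = 0 := by
    intro t X hXm hX2
    have h1 : ∫ ω, ⟪X ω, g t ω⟫ ∂P = ∫ ω, ⟪X ω, gradient f (θ t ω)⟫ ∂P :=
      shb_orth (hℱle t) hXm hX2 (hg2 t) (hgr2 t) (hgmean t)
    have h2 : ∀ ω, ⟪X ω, g t ω - gradient f (θ t ω)⟫
        = ⟪X ω, g t ω⟫ - ⟪X ω, gradient f (θ t ω)⟫ := fun ω => inner_sub_right _ _ _
    rw [integral_congr_ae (Filter.Eventually.of_forall h2),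
      integral_sub (shb_integrable_inner hX2 (hg2 t)) (shb_integrable_inner hX2 (hgr2 t)),
      h1, sub_self]
  set G : ℕ → ℝ := fun t => ∫ ω, ‖gradient f (θ t ω)‖ ^ 2 ∂P with hGdef
  set M : ℕ → ℝ := fun t => ∫ ω, ‖m t ω‖ ^ 2 ∂P with hMdef
  set D : ℕ → ℝ := fun t => ∫ ω, ⟪gradient f (θ t ω), m t ω⟫ ∂P with hDdef
  set F : ℕ → ℝ := fun t => ∫ ω, f (θ t ω) ∂P with hFdef
  set C : ℕ → ℝ := fun t => ∫ ω, ⟪m t ω, gradient f (θ (t + 1) ω)⟫ ∂P with hCdef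
  have hGnn : ∀ t, 0 ≤ G t := fun t => integral_nonneg fun ω => by positivity
  have hMnn : ∀ t, 0 ≤ M t := fun t => integral_nonneg fun ω => by positivity
  -- squared norm of the stochastic gradient
  have hg_sq : ∀ s, ∫ ω, ‖g s ω‖ ^ 2 ∂P ≤ G s + σ ^ 2 / b s := by
    intro s
    have hexp := shb_norm_add_sq (P := P) (hgr2 s) (hξ2 s)
    have he : ∫ ω, ‖g s ω‖ ^ 2 ∂P
        = ∫ ω, ‖gradient f (θ s ω) + (g s ω - gradient f (θ s ω))‖ ^ 2 ∂P := by
      refine integral_congr_ae (Filter.Eventually.of_forall fun ω => ?_)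
      have e : gradient f (θ s ω) + (g s ω - gradient f (θ s ω)) = g s ω := by abel
      show ‖g s ω‖ ^ 2 = ‖gradient f (θ s ω) + (g s ω - gradient f (θ s ω))‖ ^ 2
      rw [e]
    rw [he, hexp, horth s _ (hgm s) (hgr2 s)]
    have := hv s
    simp only [hGdef]
    linarith
  -- D recursion
  have hD0 : D 0 = G 0 := by
    simp only [hDdef, hGdef]
    have h1 : ∫ ω, ⟪gradient f (θ 0 ω), m 0 ω⟫ ∂P
        = ∫ ω, ⟪gradient f (θ 0 ω), g 0 ω⟫ ∂P := by rw [hm0]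
    rw [h1, shb_orth (hℱle 0) (hgm 0) (hgr2 0) (hg2 0) (hgr2 0) (hgmean 0)]
    refine integral_congr_ae (Filter.Eventually.of_forall fun ω => ?_)
    exact real_inner_self_eq_norm_sq _
  have hDs : ∀ t, D (t + 1) = β * C t + G (t + 1) := by
    intro t
    have hint1 : Integrable (fun ω => ⟪gradient f (θ (t + 1) ω), m t ω⟫) P :=
      shb_integrable_inner (hgr2 (t + 1)) (hm2 t)
    have hint2 : Integrable (fun ω => ⟪gradient f (θ (t + 1) ω), g (t + 1) ω⟫) P :=
      shb_integrable_inner (hgr2 (t + 1)) (hg2 (t + 1))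
    simp only [hDdef, hGdef, hCdef]
    calc ∫ ω, ⟪gradient f (θ (t + 1) ω), m (t + 1) ω⟫ ∂P
        = ∫ ω, (β * ⟪gradient f (θ (t + 1) ω), m t ω⟫
            + ⟪gradient f (θ (t + 1) ω), g (t + 1) ω⟫) ∂P := by
          refine integral_congr_ae (Filter.Eventually.of_forall fun ω => ?_)
          simp only [hmrec t, inner_add_right, real_inner_smul_right]
      _ = β * ∫ ω, ⟪gradient f (θ (t + 1) ω), m t ω⟫ ∂P
          + ∫ ω, ⟪gradient f (θ (t + 1) ω), g (t + 1) ω⟫ ∂P := by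
          rw [integral_add (hint1.const_mul β) hint2, integral_const_mul]
      _ = β * ∫ ω, ⟪m t ω, gradient f (θ (t + 1) ω)⟫ ∂P
          + ∫ ω, ‖gradient f (θ (t + 1) ω)‖ ^ 2 ∂P := by
          rw [shb_orth (hℱle (t + 1)) (hgm (t + 1)) (hgr2 (t + 1)) (hg2 (t + 1))
            (hgr2 (t + 1)) (hgmean (t + 1))]
          congr 1
          · congr 1
            refine integral_congr_ae (Filter.Eventually.of_forall fun ω => ?_)
            exact real_inner_comm _ _
          · refine integral_congr_ae (Filter.Eventually.of_forall fun ω => ?_)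
            exact real_inner_self_eq_norm_sq _
  -- M recursion
  have hM0 : M 0 ≤ 2 * D 0 - G 0 + σ ^ 2 / b 0 := by
    have h1 : M 0 = ∫ ω, ‖g 0 ω‖ ^ 2 ∂P := by simp only [hMdef]; rw [hm0]
    have := hg_sq 0
    rw [hD0]; linarith
  have hMs : ∀ t, M (t + 1) ≤ β ^ 2 * M t + 2 * D (t + 1) - G (t + 1) + σ ^ 2 / b (t + 1) := by
    intro t
    have h1 : M (t + 1) = ∫ ω, ‖β • m t ω + g (t + 1) ω‖ ^ 2 ∂P := by
      simp only [hMdef]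
      refine integral_congr_ae (Filter.Eventually.of_forall fun ω => ?_)
      rw [hmrec t]
    have hexp := shb_norm_add_sq (P := P) (A := fun ω => β • m t ω) (B := g (t + 1))
      ((hm2 t).const_smul β) (hg2 (t + 1))
    have h2 : ∫ ω, ‖β • m t ω‖ ^ 2 ∂P = β ^ 2 * M t := by
      simp only [hMdef]
      rw [← integral_const_mul]
      refine integral_congr_ae (Filter.Eventually.of_forall fun ω => ?_)
      show ‖β • m t ω‖ ^ 2 = β ^ 2 * ‖m t ω‖ ^ 2
      rw [norm_smul, mul_pow, Real.norm_eq_abs, sq_abs]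
    have h3 : ∫ ω, ⟪β • m t ω, g (t + 1) ω⟫ ∂P = β * ∫ ω, ⟪m t ω, g (t + 1) ω⟫ ∂P := by
      rw [← integral_const_mul]
      refine integral_congr_ae (Filter.Eventually.of_forall fun ω => ?_)
      show ⟪β • m t ω, g (t + 1) ω⟫ = β * ⟪m t ω, g (t + 1) ω⟫
      exact real_inner_smul_left _ _ _
    have h4 : ∫ ω, ⟪m t ω, g (t + 1) ω⟫ ∂P = C t := by
      simp only [hCdef]
      exact shb_orth (hℱle (t + 1)) (hmmeas t) (hm2 t) (hg2 (t + 1)) (hgr2 (t + 1))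
        (hgmean (t + 1))
    have h5 := hg_sq (t + 1)
    have hDrw := hDs t
    rw [h1, hexp, h2, h3, h4]
    linarith
  have hMrec : ∀ t, M (t + 1) ≤ β ^ 2 * M t + 2 * D (t + 1) - G (t + 1) + σ ^ 2 / b (t + 1) := hMs
  -- descent step
  have hFstep : ∀ t, F (t + 1) ≤ F t - α t * D t + L / 2 * α t ^ 2 * M t := by
    intro t
    have hpt : ∀ ω, f (θ (t + 1) ω) ≤ f (θ t ω) - α t * ⟪gradient f (θ t ω), m t ω⟫
        + L / 2 * α t ^ 2 * ‖m t ω‖ ^ 2 := by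
      intro ω
      have h := shb_descent hL.le hfdiff hflip (θ t ω) (θ t ω - α t • m t ω)
      have e1 : θ t ω - α t • m t ω - θ t ω = -(α t • m t ω) := by abel
      rw [e1, inner_neg_right, real_inner_smul_right, norm_neg, norm_smul] at h
      have e2 : θ (t + 1) ω = θ t ω - α t • m t ω := by rw [hθrec t]
      have e3 : (‖(α t : ℝ)‖ * ‖m t ω‖) ^ 2 = α t ^ 2 * ‖m t ω‖ ^ 2 := by
        rw [mul_pow, Real.norm_eq_abs, sq_abs]
      rw [e3] at h
      rw [e2]
      nlinarith [h]
    have hint1 : Integrable (fun ω => ⟪gradient f (θ t ω), m t ω⟫) P :=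
      shb_integrable_inner (hgr2 t) (hm2 t)
    have hRHS : Integrable (fun ω => f (θ t ω) - α t * ⟪gradient f (θ t ω), m t ω⟫
        + L / 2 * α t ^ 2 * ‖m t ω‖ ^ 2) P :=
      ((hfint t).sub (hint1.const_mul _)).add ((hmint t).const_mul _)
    have hmono := integral_mono (hfint (t + 1)) hRHS hpt
    simp only [hFdef, hDdef, hMdef]
    calc ∫ ω, f (θ (t + 1) ω) ∂P
        ≤ ∫ ω, (f (θ t ω) - α t * ⟪gradient f (θ t ω), m t ω⟫
            + L / 2 * α t ^ 2 * ‖m t ω‖ ^ 2) ∂P := hmono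
      _ = ∫ ω, f (θ t ω) ∂P - α t * ∫ ω, ⟪gradient f (θ t ω), m t ω⟫ ∂P
          + L / 2 * α t ^ 2 * ∫ ω, ‖m t ω‖ ^ 2 ∂P := by
          have I1 : Integrable (fun ω => f (θ t ω)
              - α t * ⟪gradient f (θ t ω), m t ω⟫) P := (hfint t).sub (hint1.const_mul (α t))
          have I2 : Integrable (fun ω => L / 2 * α t ^ 2 * ‖m t ω‖ ^ 2) P :=
            (hmint t).const_mul _
          have I3 : Integrable (fun ω => α t * ⟪gradient f (θ t ω), m t ω⟫) P :=
            hint1.const_mul (α t)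
          rw [integral_add I1 I2, integral_sub (hfint t) I3, integral_const_mul,
            integral_const_mul]
  -- bounds at the endpoints
  have hF0 : F 0 = f θ₀ := by
    simp only [hFdef]
    rw [hθ0]
    simp
  have hFT : ∀ t, (⨅ x, f x) ≤ F t := by
    intro t
    have h1 : ∀ ω, (⨅ x, f x) ≤ f (θ t ω) := fun ω => ciInf_le hfbdd _
    calc (⨅ x, f x) = ∫ _ω, (⨅ x, f x) ∂P := by simp
      _ ≤ F t := integral_mono (integrable_const _) (hfint t) h1
  -- main summation bound
  obtain ⟨n, rfl⟩ : ∃ n, T = n + 1 := ⟨T - 1, by omega⟩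
  have key : ∑ t ∈ Finset.range (n + 1), α t * G t
      ≤ 2 * (f θ₀ - ⨅ x, f x) + σ ^ 2 * ∑ t ∈ Finset.range (n + 1), α t / b t := by
    -- telescoping descent bound
    have htel : ∑ t ∈ Finset.range (n + 1), (α t * D t - L / 2 * α t ^ 2 * M t)
        ≤ f θ₀ - ⨅ x, f x := by
      have h1 : ∀ t, α t * D t - L / 2 * α t ^ 2 * M t ≤ F t - F (t + 1) := by
        intro t; have := hFstep t; linarith
      calc ∑ t ∈ Finset.range (n + 1), (α t * D t - L / 2 * α t ^ 2 * M t)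
          ≤ ∑ t ∈ Finset.range (n + 1), (F t - F (t + 1)) :=
            Finset.sum_le_sum fun t _ => h1 t
        _ = F 0 - F (n + 1) := Finset.sum_range_sub' F (n + 1)
        _ ≤ f θ₀ - ⨅ x, f x := by
            have := hFT (n + 1); rw [hF0]; linarith
    -- weighted M recursion bound
    have hw : ∀ t, α t * M t ≤ (if t = 0 then 0 else c * β ^ 2 * (α (t - 1) * M (t - 1)))
        + 2 * (α t * D t) - α t * G t + σ ^ 2 * (α t / b t) := by
      intro t
      cases t with
      | zero =>
        rw [if_pos rfl]
        have h := hM0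
        have hα0 := hα 0
        have : α 0 * M 0 ≤ α 0 * (2 * D 0 - G 0 + σ ^ 2 / b 0) :=
          mul_le_mul_of_nonneg_left h hα0.le
        calc α 0 * M 0 ≤ α 0 * (2 * D 0 - G 0 + σ ^ 2 / b 0) := this
          _ = 0 + 2 * (α 0 * D 0) - α 0 * G 0 + σ ^ 2 * (α 0 / b 0) := by ring
      | succ t =>
        rw [if_neg (by omega : ¬(t + 1 = 0))]
        simp only [Nat.add_sub_cancel]
        have h := hMrec t
        have hα1 := hα (t + 1)
        have h2 : α (t + 1) * M (t + 1)
            ≤ α (t + 1) * (β ^ 2 * M t + 2 * D (t + 1) - G (t + 1) + σ ^ 2 / b (t + 1)) :=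
          mul_le_mul_of_nonneg_left h hα1.le
        have h3 : α (t + 1) * (β ^ 2 * M t) ≤ c * β ^ 2 * (α t * M t) := by
          have h4 : α (t + 1) * M t ≤ c * α t * M t :=
            mul_le_mul_of_nonneg_right (hαc t) (hMnn t)
          have h5 : β ^ 2 * (α (t + 1) * M t) ≤ β ^ 2 * (c * α t * M t) :=
            mul_le_mul_of_nonneg_left h4 (sq_nonneg β)
          linarith [h5]
        have h2' : α (t + 1) * M (t + 1)
            ≤ α (t + 1) * (β ^ 2 * M t) + 2 * (α (t + 1) * D (t + 1))
              - α (t + 1) * G (t + 1) + σ ^ 2 * (α (t + 1) / b (t + 1)) := by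
          calc α (t + 1) * M (t + 1)
              ≤ α (t + 1) * (β ^ 2 * M t + 2 * D (t + 1) - G (t + 1) + σ ^ 2 / b (t + 1)) := h2
            _ = α (t + 1) * (β ^ 2 * M t) + 2 * (α (t + 1) * D (t + 1))
                - α (t + 1) * G (t + 1) + σ ^ 2 * (α (t + 1) / b (t + 1)) := by ring
        linarith [h2', h3]
    have hsum : ∑ t ∈ Finset.range (n + 1), α t * M t
        ≤ c * β ^ 2 * ∑ t ∈ Finset.range (n + 1), α t * M t
          + 2 * ∑ t ∈ Finset.range (n + 1), α t * D t
          - ∑ t ∈ Finset.range (n + 1), α t * G t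
          + σ ^ 2 * ∑ t ∈ Finset.range (n + 1), α t / b t := by
      have h1 : ∑ t ∈ Finset.range (n + 1), α t * M t
          ≤ ∑ t ∈ Finset.range (n + 1),
            ((if t = 0 then 0 else c * β ^ 2 * (α (t - 1) * M (t - 1)))
              + 2 * (α t * D t) - α t * G t + σ ^ 2 * (α t / b t)) :=
        Finset.sum_le_sum fun t _ => hw t
      have h2 : ∑ t ∈ Finset.range (n + 1),
            (if t = 0 then 0 else c * β ^ 2 * (α (t - 1) * M (t - 1)))
          ≤ c * β ^ 2 * ∑ t ∈ Finset.range (n + 1), α t * M t := by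
        have hcβ : 0 ≤ c * β ^ 2 := by positivity
        rw [Finset.sum_range_succ']
        simp only [reduceIte, add_zero]
        have h3 : ∀ i ∈ Finset.range n,
            (if i + 1 = 0 then 0 else c * β ^ 2 * (α (i + 1 - 1) * M (i + 1 - 1)))
              = c * β ^ 2 * (α i * M i) := by
          intro i _
          simp
        rw [Finset.sum_congr rfl h3, ← Finset.mul_sum]
        have h4 : ∑ i ∈ Finset.range n, α i * M i ≤ ∑ t ∈ Finset.range (n + 1), α t * M t := by
          rw [Finset.sum_range_succ]
          have := mul_nonneg (hα n).le (hMnn n)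
          linarith
        exact mul_le_mul_of_nonneg_left h4 hcβ
      have h5 : ∑ t ∈ Finset.range (n + 1),
            ((if t = 0 then 0 else c * β ^ 2 * (α (t - 1) * M (t - 1)))
              + 2 * (α t * D t) - α t * G t + σ ^ 2 * (α t / b t))
          = (∑ t ∈ Finset.range (n + 1),
              (if t = 0 then 0 else c * β ^ 2 * (α (t - 1) * M (t - 1))))
            + 2 * ∑ t ∈ Finset.range (n + 1), α t * D t
            - ∑ t ∈ Finset.range (n + 1), α t * G t
            + σ ^ 2 * ∑ t ∈ Finset.range (n + 1), α t / b t := by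
        rw [Finset.sum_add_distrib, Finset.sum_sub_distrib, Finset.sum_add_distrib,
          Finset.mul_sum, Finset.mul_sum]
      rw [h5] at h1
      linarith
    -- step-size bound : L/2 α² ≤ (1 - cβ²)/2 α
    have hstepsz : ∑ t ∈ Finset.range (n + 1), L / 2 * α t ^ 2 * M t
        ≤ (1 - c * β ^ 2) / 2 * ∑ t ∈ Finset.range (n + 1), α t * M t := by
      rw [Finset.mul_sum]
      refine Finset.sum_le_sum fun t _ => ?_
      have h1 : L * α t ≤ 1 - c * β ^ 2 := by
        have h2 : α t * L < 1 - c * β ^ 2 := (lt_div_iff₀ hL).1 (hαmax t)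
        nlinarith
      have hM := hMnn t
      have hαt := (hα t).le
      have h6 := mul_le_mul_of_nonneg_right h1 (mul_nonneg hαt hM)
      nlinarith [h6]
    have hBD : ∑ t ∈ Finset.range (n + 1), α t * D t
        ≤ (f θ₀ - ⨅ x, f x) + ∑ t ∈ Finset.range (n + 1), L / 2 * α t ^ 2 * M t := by
      have := htel
      rw [Finset.sum_sub_distrib] at this
      linarith
    linarith [hsum, hstepsz, hBD]
  -- conclude: min over t is at most the weighted average
  have hSα : 0 < ∑ t ∈ Finset.range (n + 1), α t :=
    Finset.sum_pos (fun t _ => hα t) Finset.nonempty_range_add_one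
  set inf := (Finset.range (n + 1)).inf'
      (Finset.nonempty_range_iff.mpr (by omega)) G with hinf
  have hmin : inf * ∑ t ∈ Finset.range (n + 1), α t
      ≤ ∑ t ∈ Finset.range (n + 1), α t * G t := by
    rw [Finset.mul_sum]
    refine Finset.sum_le_sum fun t ht => ?_
    have h1 : inf ≤ G t := Finset.inf'_le _ ht
    have := mul_le_mul_of_nonneg_right h1 (hα t).le
    linarith [this]
  have hfinal : inf ≤ (2 * (f θ₀ - ⨅ x, f x)
      + σ ^ 2 * ∑ t ∈ Finset.range (n + 1), α t / b t) / ∑ t ∈ Finset.range (n + 1), α t := by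
    rw [le_div_iff₀ hSα]
    calc inf * ∑ t ∈ Finset.range (n + 1), α t
        ≤ ∑ t ∈ Finset.range (n + 1), α t * G t := hmin
      _ ≤ 2 * (f θ₀ - ⨅ x, f x) + σ ^ 2 * ∑ t ∈ Finset.range (n + 1), α t / b t := key
  have heq : (2 * (f θ₀ - ⨅ x, f x) + σ ^ 2 * ∑ t ∈ Finset.range (n + 1), α t / b t)
      / ∑ t ∈ Finset.range (n + 1), α t
      = 2 * (f θ₀ - ⨅ x, f x) * (1 / ∑ t ∈ Finset.range (n + 1), α t)
        + σ ^ 2 * ((∑ t ∈ Finset.range (n + 1), α t / b t)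
          / ∑ t ∈ Finset.range (n + 1), α t) := by
    field_simp
  rw [← heq]
  exact hfinal
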